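/- A tower of rings C → B → A is right depth three (i.e., A ⊗_B A is isomorphic as A-C-bimodule to a direct summand of A^N for some N) if and only if there exist finitely many elements γ_i ∈ End_B A_C and u_i ∈ (A ⊗_B A)^C such that x ⊗_B y = Σ_i x γ_i(y) u_i for all x, y ∈ A. -/

import Mathlib

open scoped BigOperators

section BTCore

variable {R M N P : Type*} [AddCommGroup M] [AddCommGroup N] [AddCommGroup P]

/-- Relations defining the balanced tensor product of `M` and `N` over the
"scalars" `R`, where `R` acts on the right of `M` via `rho` and on the left of
`N` via `lam`. -/
inductive BTRel (rho : R → M →+ M) (lam : R → N →+ N) :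
    FreeAbelianGroup (M × N) → FreeAbelianGroup (M × N) → Prop
  | addl (m m' : M) (n : N) :
      BTRel rho lam (FreeAbelianGroup.of (m + m', n))
        (FreeAbelianGroup.of (m, n) + FreeAbelianGroup.of (m', n))
  | addr (m : M) (n n' : N) :
      BTRel rho lam (FreeAbelianGroup.of (m, n + n'))
        (FreeAbelianGroup.of (m, n) + FreeAbelianGroup.of (m, n'))
  | bal (r : R) (m : M) (n : N) :
      BTRel rho lam (FreeAbelianGroup.of (rho r m, n))
        (FreeAbelianGroup.of (m, lam r n))

/-- The balanced tensor product `M ⊗_R N`. -/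
def BT (rho : R → M →+ M) (lam : R → N →+ N) : Type _ :=
  (addConGen (BTRel rho lam)).Quotient

namespace BT

variable {rho : R → M →+ M} {lam : R → N →+ N}

instance : AddGroup (BT rho lam) :=
  inferInstanceAs (AddGroup (addConGen (BTRel rho lam)).Quotient)

instance : AddCommGroup (BT rho lam) :=
  { (inferInstance : AddGroup (BT rho lam)) with
    add_comm := fun a b => by
      refine AddCon.induction_on₂ a b fun x y => ?_
      change ((x + y : FreeAbelianGroup (M × N)) :
        (addConGen (BTRel rho lam)).Quotient) = ((y + x : FreeAbelianGroup (M × N)) : _)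
      rw [add_comm] }

/-- The canonical generator `m ⊗ n`. -/
def mk (rho : R → M →+ M) (lam : R → N →+ N) (m : M) (n : N) : BT rho lam :=
  ((FreeAbelianGroup.of (m, n) : FreeAbelianGroup (M × N)) :
    (addConGen (BTRel rho lam)).Quotient)

lemma mk_rel {x y : FreeAbelianGroup (M × N)} (h : BTRel rho lam x y) :
    (x : (addConGen (BTRel rho lam)).Quotient) = (y : _) :=
  (AddCon.eq _).2 (AddConGen.Rel.of _ _ h)

lemma mk_add_left (m m' : M) (n : N) :
    mk rho lam (m + m') n = mk rho lam m n + mk rho lam m' n := by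
  have := mk_rel (BTRel.addl m m' n (rho := rho) (lam := lam))
  exact this

lemma mk_add_right (m : M) (n n' : N) :
    mk rho lam m (n + n') = mk rho lam m n + mk rho lam m n' := by
  have := mk_rel (BTRel.addr m n n' (rho := rho) (lam := lam))
  exact this

lemma mk_bal (r : R) (m : M) (n : N) :
    mk rho lam (rho r m) n = mk rho lam m (lam r n) :=
  mk_rel (BTRel.bal r m n)

/-- Lift a biadditive balanced map to the balanced tensor product. -/
def lift (rho : R → M →+ M) (lam : R → N →+ N) (φ : M → N → P)
    (h1 : ∀ m m' n, φ (m + m') n = φ m n + φ m' n)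
    (h2 : ∀ m n n', φ m (n + n') = φ m n + φ m n')
    (h3 : ∀ r m n, φ (rho r m) n = φ m (lam r n)) : BT rho lam →+ P :=
  AddCon.lift _ (FreeAbelianGroup.lift fun p => φ p.1 p.2)
    (AddCon.addConGen_le.2 (by
      rintro x y h
      cases h with
      | addl m m' n => simp [AddCon.ker_rel, FreeAbelianGroup.lift_apply_of, h1]
      | addr m n n' => simp [AddCon.ker_rel, FreeAbelianGroup.lift_apply_of, h2]
      | bal r m n => simp [AddCon.ker_rel, FreeAbelianGroup.lift_apply_of, h3]))

@[simp] lemma lift_mk (φ : M → N → P) (h1 h2 h3) (m : M) (n : N) :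
    lift rho lam φ h1 h2 h3 (mk rho lam m n) = φ m n := by
  show (addConGen (BTRel rho lam)).lift _ _ ((FreeAbelianGroup.of (m, n) :
    FreeAbelianGroup (M × N)) : (addConGen (BTRel rho lam)).Quotient) = _
  rw [AddCon.lift_coe, FreeAbelianGroup.lift_apply_of]

/-- Induction principle for the balanced tensor product. -/
protected lemma ind {motive : BT rho lam → Prop} (zero : motive 0)
    (mk' : ∀ m n, motive (mk rho lam m n)) (neg : ∀ x, motive x → motive (-x))
    (add : ∀ x y, motive x → motive y → motive (x + y)) : ∀ x : BT rho lam, motive x := by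
  intro x
  refine AddCon.induction_on x fun z => ?_
  induction z using FreeAbelianGroup.induction_on with
  | zero => exact zero
  | of p => exact mk' p.1 p.2
  | neg p h =>
      have : ((-FreeAbelianGroup.of p : FreeAbelianGroup (M × N)) :
          (addConGen (BTRel rho lam)).Quotient) = -(mk rho lam p.1 p.2) := rfl
      rw [this]; exact neg _ (mk' p.1 p.2)
  | add x y hx hy =>
      have : ((x + y : FreeAbelianGroup (M × N)) :
          (addConGen (BTRel rho lam)).Quotient) = (x : _) + (y : _) := rfl
      rw [this]; exact add _ _ hx hy

lemma hom_ext {f g : BT rho lam →+ P}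
    (h : ∀ m n, f (mk rho lam m n) = g (mk rho lam m n)) : f = g := by
  ext x
  refine BT.ind (motive := fun x => f x = g x) ?_ ?_ ?_ ?_ x
  · simp
  · exact h
  · intro y hy; simp [hy]
  · intro y z hy hz; simp [hy, hz]

end BT

end BTCore

section Tensor

variable {B A C P : Type*} [Ring B] [Ring A] [Ring C] [AddCommGroup P]

/-- The tensor product `A ⊗_B A` relative to a ring homomorphism `g : B →+* A`. -/
def Tsr (g : B →+* A) : Type _ :=
  BT (fun b => AddMonoidHom.mulRight (g b)) (fun b => AddMonoidHom.mulLeft (g b))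

instance (g : B →+* A) : AddCommGroup (Tsr g) := inferInstanceAs (AddCommGroup (BT _ _))

namespace Tsr

variable (g : B →+* A)

/-- The generator `x ⊗_B y` of `Tsr g`. -/
def tmk (x y : A) : Tsr g := BT.mk _ _ x y

lemma tmk_add_left (x x' y : A) : tmk g (x + x') y = tmk g x y + tmk g x' y :=
  BT.mk_add_left x x' y

lemma tmk_add_right (x y y' : A) : tmk g x (y + y') = tmk g x y + tmk g x y' :=
  BT.mk_add_right x y y'

lemma tmk_bal (x : A) (b : B) (y : A) : tmk g (x * g b) y = tmk g x (g b * y) :=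
  BT.mk_bal b x y

/-- Lift a biadditive `B`-balanced map `A × A → P` to `Tsr g`. -/
def tlift (φ : A → A → P)
    (h1 : ∀ x x' y, φ (x + x') y = φ x y + φ x' y)
    (h2 : ∀ x y y', φ x (y + y') = φ x y + φ x y')
    (h3 : ∀ x b y, φ (x * g b) y = φ x (g b * y)) : Tsr g →+ P :=
  BT.lift _ _ φ h1 h2 (fun r m n => h3 m r n)

@[simp] lemma tlift_mk (φ : A → A → P) (h1 h2 h3) (x y : A) :
    tlift g φ h1 h2 h3 (tmk g x y) = φ x y :=
  BT.lift_mk φ h1 h2 _ x y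

lemma thom_ext {g : B →+* A} {f f' : Tsr g →+ P}
    (h : ∀ x y, f (tmk g x y) = f' (tmk g x y)) : f = f' :=
  BT.hom_ext h

/-- Left multiplication by `a ∈ A` on the first tensorand. -/
def lmul (a : A) : Tsr g →+ Tsr g :=
  tlift g (fun x y => tmk g (a * x) y)
    (fun x x' y => by rw [mul_add, tmk_add_left])
    (fun x y y' => by rw [tmk_add_right])
    (fun x b y => by rw [← mul_assoc, tmk_bal])

@[simp] lemma lmul_mk (a x y : A) : lmul g a (tmk g x y) = tmk g (a * x) y :=
  tlift_mk g _ _ _ _ x y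

/-- Right multiplication by `a ∈ A` on the second tensorand. -/
def rmul (a : A) : Tsr g →+ Tsr g :=
  tlift g (fun x y => tmk g x (y * a))
    (fun x x' y => by rw [tmk_add_left])
    (fun x y y' => by rw [add_mul, tmk_add_right])
    (fun x b y => by rw [tmk_bal, mul_assoc])

@[simp] lemma rmul_mk (a x y : A) : rmul g a (tmk g x y) = tmk g x (y * a) :=
  tlift_mk g _ _ _ _ x y

lemma lmul_lmul (a a' : A) (p : Tsr g) : lmul g a (lmul g a' p) = lmul g (a * a') p := by
  have : ((lmul g a).comp (lmul g a')) = lmul g (a * a') :=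
    thom_ext fun x y => by simp [mul_assoc]
  exact DFunLike.congr_fun this p

lemma rmul_rmul (a a' : A) (p : Tsr g) : rmul g a (rmul g a' p) = rmul g (a' * a) p := by
  have : ((rmul g a).comp (rmul g a')) = rmul g (a' * a) :=
    thom_ext fun x y => by simp [mul_assoc]
  exact DFunLike.congr_fun this p

lemma lmul_rmul (a a' : A) (p : Tsr g) : lmul g a (rmul g a' p) = rmul g a' (lmul g a p) := by
  have : ((lmul g a).comp (rmul g a')) = (rmul g a').comp (lmul g a) :=
    thom_ext fun x y => by simp
  exact DFunLike.congr_fun this p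

lemma lmul_add_smul (a a' : A) (p : Tsr g) :
    lmul g (a + a') p = lmul g a p + lmul g a' p := by
  have : lmul g (a + a') = lmul g a + lmul g a' :=
    thom_ext fun x y => by simp [add_mul, tmk_add_left]
  rw [this]; rfl

lemma rmul_add_smul (a a' : A) (p : Tsr g) :
    rmul g (a + a') p = rmul g a p + rmul g a' p := by
  have : rmul g (a + a') = rmul g a + rmul g a' :=
    thom_ext fun x y => by simp [mul_add, tmk_add_right]
  rw [this]; rfl

/-- The multiplication map `μ : A ⊗_B A → A`. -/
def mulmap : Tsr g →+ A :=
  tlift g (fun x y => x * y) (fun x x' y => by rw [add_mul])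
    (fun x y y' => by rw [mul_add]) (fun x b y => by rw [mul_assoc])

@[simp] lemma mulmap_mk (x y : A) : mulmap g (tmk g x y) = x * y := tlift_mk g _ _ _ _ x y

end Tsr

section TowerDefs

open Tsr

variable (g : B →+* A) (hC : C →+* A)

/-- `p ∈ (A ⊗_B A)^C` : the `C`-centralizer condition, where `C` maps to `A` via `hC`. -/
def TCent (p : Tsr g) : Prop := ∀ c : C, lmul g (hC c) p = rmul g (hC c) p

/-- `α ∈ End_B A_C` : additive endomorphisms of `A` that are left `B`-linear
(via `g`) and right `C`-linear (via `hC`). -/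
def EndBAC (α : A →+ A) : Prop :=
  (∀ (b : B) (x : A), α (g b * x) = g b * α x) ∧
  ∀ (x : A) (c : C), α (x * hC c) = α x * hC c

/-- The tower is right depth three: `A ⊗_B A` is isomorphic, as `A`-`C`-bimodules,
to a direct summand of `A^n` for some `n`. Here the left `A`-action and right
`C`-action on `A^n` are componentwise, and on `Tsr g` they are `lmul` and `rmul`. -/
def IsRightD3 : Prop :=
  ∃ (n : ℕ) (π : (Fin n → A) →+ Tsr g) (σ : Tsr g →+ (Fin n → A)),
    (∀ (a : A) (v : Fin n → A), π (fun i => a * v i) = lmul g a (π v)) ∧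
    (∀ (c : C) (v : Fin n → A), π (fun i => v i * hC c) = rmul g (hC c) (π v)) ∧
    (∀ (a : A) (p : Tsr g) (i : Fin n), σ (lmul g a p) i = a * σ p i) ∧
    (∀ (c : C) (p : Tsr g) (i : Fin n), σ (rmul g (hC c) p) i = σ p i * hC c) ∧
    (∀ p : Tsr g, π (σ p) = p)

end TowerDefs

end Tensor

open Tsr



/-- A tower of rings `C → B → A` is right depth three iff there are
finitely many `γ_i ∈ End_B A_C` and `u_i ∈ (A ⊗_B A)^C` satisfying
`x ⊗_B y = ∑ i, x γ_i(y) u_i` for all `x, y ∈ A`. -/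
theorem isRightD3_iff_quasibases {C B A : Type*} [Ring C] [Ring B] [Ring A]
    (f : C →+* B) (g : B →+* A) :
    IsRightD3 g (g.comp f) ↔
      ∃ (n : ℕ) (γ : Fin n → (A →+ A)) (u : Fin n → Tsr g),
        (∀ i, EndBAC g (g.comp f) (γ i)) ∧
        (∀ i, TCent g (g.comp f) (u i)) ∧
        ∀ x y : A, tmk g x y = ∑ i, lmul g (x * γ i y) (u i) := by
  constructor
  · rintro ⟨n, π, σ, hπl, hπr, hσl, hσr, hπσ⟩
    refine ⟨n, fun i => AddMonoidHom.mk' (fun y => σ (tmk g 1 y) i) ?_,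
      fun i => π (Pi.single i 1), ?_, ?_, ?_⟩
    · intro y y'
      show σ (tmk g 1 (y + y')) i = σ (tmk g 1 y) i + σ (tmk g 1 y') i
      rw [tmk_add_right, map_add]; rfl
    · intro i
      constructor
      · intro b x
        have h1 : tmk g 1 (g b * x) = lmul g (g b) (tmk g 1 x) := by
          rw [lmul_mk, mul_one, ← one_mul (g b), tmk_bal, one_mul]
        show σ (tmk g 1 (g b * x)) i = g b * σ (tmk g 1 x) i
        rw [h1, hσl]
      · intro x c
        have h1 : tmk g 1 (x * (g.comp f) c) = rmul g ((g.comp f) c) (tmk g 1 x) := by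
          rw [rmul_mk]
        show σ (tmk g 1 (x * (g.comp f) c)) i = σ (tmk g 1 x) i * (g.comp f) c
        rw [h1, hσr]
    · intro i c
      have key : (fun j => (g.comp f) c * (Pi.single i (1:A) : Fin n → A) j) =
          (fun j => (Pi.single i (1:A) : Fin n → A) j * (g.comp f) c) := by
        funext j
        rcases eq_or_ne i j with h | h
        · subst h; simp
        · simp [Pi.single_eq_of_ne' h]
      calc lmul g ((g.comp f) c) (π (Pi.single i 1))
          = π (fun j => (g.comp f) c * (Pi.single i (1:A) : Fin n → A) j) := (hπl _ _).symm
        _ = π (fun j => (Pi.single i (1:A) : Fin n → A) j * (g.comp f) c) := by rw [key]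
        _ = rmul g ((g.comp f) c) (π (Pi.single i 1)) := hπr _ _
    · intro x y
      set v : Fin n → A := σ (tmk g 1 y) with hv
      have hsum : tmk g 1 y = ∑ i, lmul g (v i) (π (Pi.single i 1)) := by
        have h1 : tmk g 1 y = π v := (hπσ _).symm
        have h2 : v = ∑ i, Pi.single i (v i) := by
          funext j; simp [Finset.sum_apply, Pi.single_apply]
        have h3 : ∀ i : Fin n, (Pi.single i (v i) : Fin n → A) =
            fun j => v i * (Pi.single i (1:A) : Fin n → A) j := by
          intro i; funext j
          rcases eq_or_ne i j with h | h
          · subst h; simp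
          · simp [Pi.single_eq_of_ne' h]
        rw [h1]
        conv_lhs => rw [h2]
        rw [map_sum]
        refine Finset.sum_congr rfl fun i _ => ?_
        rw [h3 i, hπl]
      have : tmk g x y = lmul g x (tmk g 1 y) := by rw [lmul_mk, mul_one]
      rw [this, hsum, map_sum]
      refine Finset.sum_congr rfl fun i _ => ?_
      rw [lmul_lmul]
      rfl
  · rintro ⟨n, γ, u, hγ, hu, hq⟩
    have hπadd : ∀ v w : Fin n → A,
        (fun v : Fin n → A => ∑ i, lmul g (v i) (u i)) (v + w)
          = (fun v : Fin n → A => ∑ i, lmul g (v i) (u i)) v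
            + (fun v : Fin n → A => ∑ i, lmul g (v i) (u i)) w := by
      intro v w
      dsimp only
      rw [← Finset.sum_add_distrib]
      exact Finset.sum_congr rfl fun i _ => lmul_add_smul g _ _ _
    set π : (Fin n → A) →+ Tsr g :=
      AddMonoidHom.mk' (fun v => ∑ i, lmul g (v i) (u i)) hπadd with hπ
    have h1 : ∀ x x' y : A, (fun i => (x + x') * γ i y : Fin n → A)
        = (fun i => x * γ i y) + fun i => x' * γ i y := by
      intro x x' y; funext i; exact add_mul x x' (γ i y)
    have h2 : ∀ x y y' : A, (fun i => x * γ i (y + y') : Fin n → A)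
        = (fun i => x * γ i y) + fun i => x * γ i y' := by
      intro x y y'; funext i; rw [map_add, mul_add]; rfl
    have h3 : ∀ (x : A) (b : B) (y : A), (fun i => (x * g b) * γ i y : Fin n → A)
        = fun i => x * γ i (g b * y) := by
      intro x b y; funext i; rw [(hγ i).1, mul_assoc]
    set σ : Tsr g →+ (Fin n → A) :=
      tlift g (fun x y => fun i => x * γ i y) h1 h2 h3 with hσ
    have hσmk : ∀ x y : A, σ (tmk g x y) = fun i => x * γ i y := fun x y =>
      tlift_mk g _ h1 h2 h3 x y
    have hπv : ∀ v : Fin n → A, π v = ∑ i, lmul g (v i) (u i) := fun v => rfl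
    refine ⟨n, π, σ, ?_, ?_, ?_, ?_, ?_⟩
    · intro a v
      rw [hπv, hπv, map_sum]
      exact Finset.sum_congr rfl fun i _ => (lmul_lmul g a (v i) (u i)).symm
    · intro c v
      rw [hπv, hπv, map_sum]
      refine Finset.sum_congr rfl fun i _ => ?_
      rw [← lmul_lmul, hu i c, lmul_rmul]
    · intro a p i
      refine BT.ind (motive := fun p => σ (lmul g a p) i = a * σ p i) ?_ ?_ ?_ ?_ p
      · show σ (lmul g a (0 : Tsr g)) i = a * σ (0 : Tsr g) i
        simp
      · intro x y
        show σ (lmul g a (tmk g x y)) i = a * σ (tmk g x y) i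
        rw [lmul_mk, hσmk, hσmk]
        exact mul_assoc a x (γ i y)
      · intro (q : Tsr g) hq'
        show σ (lmul g a (@Neg.neg (Tsr g) _ q)) i = a * σ (@Neg.neg (Tsr g) _ q) i
        rw [map_neg, map_neg, map_neg, Pi.neg_apply, Pi.neg_apply, hq', mul_neg]
      · intro (q : Tsr g) (r : Tsr g) hq' hr'
        show σ (lmul g a (@HAdd.hAdd (Tsr g) (Tsr g) (Tsr g) _ q r)) i = a * σ (@HAdd.hAdd (Tsr g) (Tsr g) (Tsr g) _ q r) i
        rw [map_add, map_add, map_add, Pi.add_apply, Pi.add_apply, hq', hr', mul_add]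
    · intro c p i
      refine BT.ind (motive := fun p =>
        σ (rmul g ((g.comp f) c) p) i = σ p i * (g.comp f) c) ?_ ?_ ?_ ?_ p
      · show σ (rmul g ((g.comp f) c) (0 : Tsr g)) i = σ (0 : Tsr g) i * (g.comp f) c
        simp
      · intro x y
        show σ (rmul g ((g.comp f) c) (tmk g x y)) i = σ (tmk g x y) i * (g.comp f) c
        rw [rmul_mk, hσmk, hσmk]
        show x * γ i (y * (g.comp f) c) = x * γ i y * (g.comp f) c
        rw [(hγ i).2, mul_assoc]
      · intro (q : Tsr g) hq'
        show σ (rmul g ((g.comp f) c) (@Neg.neg (Tsr g) _ q)) i = σ (@Neg.neg (Tsr g) _ q) i * (g.comp f) c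
        rw [map_neg, map_neg, map_neg, Pi.neg_apply, Pi.neg_apply, hq', neg_mul]
      · intro (q : Tsr g) (r : Tsr g) hq' hr'
        show σ (rmul g ((g.comp f) c) (@HAdd.hAdd (Tsr g) (Tsr g) (Tsr g) _ q r)) i = σ (@HAdd.hAdd (Tsr g) (Tsr g) (Tsr g) _ q r) i * (g.comp f) c
        rw [map_add, map_add, map_add, Pi.add_apply, Pi.add_apply, hq', hr', add_mul]
    · intro p
      have key : π.comp σ = AddMonoidHom.id (Tsr g) := by
        refine thom_ext fun x y => ?_
        show π (σ (tmk g x y)) = tmk g x y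
        rw [hσmk, hπv]
        exact (hq x y).symm
      exact DFunLike.congr_fun key p
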